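/- arXiv:2311.11648 — 3 statements merged into one kernel-verified Lean document; each statement's English description precedes it below -/
import Mathlib

section
/- Let V : ℝ^N → ℝ be continuous, radial, radially non-decreasing near 0, and let Υ ∈ C³ be a positive radial solution of −ΔΥ + V Υ = μ₁ Υ³ with a strict local maximum at the origin. Then for each coordinate direction i, ∂²_{ii}Υ(0) < 0; in particular ΔΥ(0) ≠ 0. -/
open MeasureTheory Filter Topology

/-- Laplacian as the sum of second derivatives along the coordinate directions. -/
noncomputable def lap {N : ℕ} (f : EuclideanSpace ℝ (Fin N) → ℝ)
    (x : EuclideanSpace ℝ (Fin N)) : ℝ :=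
  ∑ i : Fin N, iteratedDeriv 2 (fun t : ℝ => f (x + t • EuclideanSpace.single i 1)) 0

lemma auxD1 {g : ℝ → ℝ} (hg : ContDiff ℝ 3 g) : ContDiff ℝ 2 (deriv g) := by
  have h3 : ContDiff ℝ ((2:ℕ) + 1 : ℕ) g := by exact_mod_cast hg
  have := (contDiff_succ_iff_deriv (n := (2:ℕ))).1 (by exact_mod_cast h3)
  exact this.2.2

lemma auxD2 {g : ℝ → ℝ} (hg : ContDiff ℝ 3 g) : ContDiff ℝ 1 (deriv (deriv g)) := by
  have h2 : ContDiff ℝ ((1:ℕ) + 1 : ℕ) (deriv g) := by exact_mod_cast auxD1 hg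
  have := (contDiff_succ_iff_deriv (n := (1:ℕ))).1 (by exact_mod_cast h2)
  exact this.2.2

lemma aux1 {g : ℝ → ℝ} (hg : ContDiff ℝ 3 g) (n : ℕ) {δ : ℝ} (hδ : 0 < δ)
    (h0 : deriv g 0 = 0)
    (hpos : ∀ t ∈ Set.Ioo (0:ℝ) δ, 0 < deriv (deriv g) t + n * (deriv g t / t)) :
    ∃ t ∈ Set.Ioo (0:ℝ) δ, g 0 < g t := by
  have hg1 := auxD1 hg
  have hg2 := auxD2 hg
  have hg1d : Differentiable ℝ (deriv g) := hg1.differentiable (by norm_num)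
  have hgd : Differentiable ℝ g := hg.differentiable (by norm_num)
  set w : ℝ → ℝ := fun t => t ^ n * deriv g t with hw
  have hwd : ∀ t : ℝ, HasDerivAt w ((n : ℝ) * t ^ (n - 1) * deriv g t
      + t ^ n * deriv (deriv g) t) t := by
    intro t
    exact (hasDerivAt_pow n t).mul (hg1d t).hasDerivAt
  have hwderiv : ∀ t ∈ Set.Ioo (0:ℝ) δ, 0 < deriv w t := by
    intro t ht
    rw [(hwd t).deriv]
    have ht0 : (0:ℝ) < t := ht.1
    have key : (n : ℝ) * t ^ (n - 1) * deriv g t + t ^ n * deriv (deriv g) t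
        = t ^ n * (deriv (deriv g) t + n * (deriv g t / t)) := by
      cases n with
      | zero => simp
      | succ m =>
        have : t ^ (m + 1) = t ^ m * t := pow_succ t m
        simp only [Nat.add_sub_cancel]
        field_simp
        ring
    rw [key]
    exact mul_pos (pow_pos ht0 n) (hpos t ht)
  have hwc : ContinuousOn w (Set.Ico 0 δ) :=
    ((continuous_pow n).mul (hg1.continuous)).continuousOn
  have hwmono : StrictMonoOn w (Set.Ico 0 δ) := by
    apply strictMonoOn_of_deriv_pos (convex_Ico 0 δ) hwc
    intro t ht
    rw [interior_Ico] at ht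
    exact hwderiv t ht
  have hw0 : w 0 = 0 := by simp [hw, h0]
  have hgpos : ∀ t ∈ Set.Ioo (0:ℝ) δ, 0 < deriv g t := by
    intro t ht
    have h1 : w 0 < w t := hwmono ⟨le_refl 0, hδ⟩ ⟨ht.1.le, ht.2⟩ ht.1
    rw [hw0] at h1
    have h1' : 0 < t ^ n * deriv g t := h1
    have hp := pow_pos ht.1 n
    nlinarith [h1', hp]
  have hgmono : StrictMonoOn g (Set.Ico 0 δ) := by
    apply strictMonoOn_of_deriv_pos (convex_Ico 0 δ) hgd.continuous.continuousOn
    intro t ht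
    rw [interior_Ico] at ht
    exact hgpos t ht
  refine ⟨δ / 2, ⟨by linarith, by linarith⟩, ?_⟩
  exact hgmono ⟨le_refl 0, hδ⟩ ⟨by linarith, by linarith⟩ (by linarith)

lemma aux2 {g : ℝ → ℝ} (hg : ContDiff ℝ 3 g) {t : ℝ} (ht : 0 < t) :
    deriv (deriv (fun s : ℝ => g (Real.sqrt (t ^ 2 + s ^ 2)))) 0 = deriv g t / t := by
  have hg1 := auxD1 hg
  have hg1d : Differentiable ℝ (deriv g) := hg1.differentiable (by norm_num)
  have hgd : Differentiable ℝ g := hg.differentiable (by norm_num)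
  set φ : ℝ → ℝ := fun s => Real.sqrt (t ^ 2 + s ^ 2) with hφ
  have hpos : ∀ s : ℝ, 0 < t ^ 2 + s ^ 2 := fun s => by positivity
  have hφpos : ∀ s : ℝ, 0 < φ s := fun s => Real.sqrt_pos.2 (hpos s)
  have hφ0 : φ 0 = t := by
    simp only [hφ]
    rw [show t ^ 2 + (0:ℝ) ^ 2 = t ^ 2 by ring]
    exact Real.sqrt_sq ht.le
  have hφd : ∀ s : ℝ, HasDerivAt φ (s / φ s) s := by
    intro s
    have h1 : HasDerivAt (fun s : ℝ => t ^ 2 + s ^ 2) (2 * s) s := by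
      simpa using ((hasDerivAt_pow 2 s).const_add (t ^ 2))
    have h2 := (Real.hasDerivAt_sqrt (ne_of_gt (hpos s))).comp s h1
    refine h2.congr_deriv ?_
    have := (hφpos s).ne'
    field_simp [hφ]
    ring
  have hFd : deriv (fun s : ℝ => g (φ s)) = fun s => deriv g (φ s) * (s / φ s) := by
    funext s
    exact (((hgd (φ s)).hasDerivAt).comp s (hφd s)).deriv
  rw [hFd]
  have hu : HasDerivAt (fun s => deriv g (φ s)) (deriv (deriv g) (φ 0) * (0 / φ 0)) 0 :=
    ((hg1d (φ 0)).hasDerivAt).comp 0 (hφd 0)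
  have hv : HasDerivAt (fun s : ℝ => s / φ s) ((1 * φ 0 - 0 * (0 / φ 0)) / φ 0 ^ 2) 0 :=
    (hasDerivAt_id 0).div (hφd 0) (hφpos 0).ne'
  have := hu.mul hv
  rw [show (fun s => deriv g (φ s) * (s / φ s)) = ((fun s => deriv g (φ s)) * fun s => s / φ s) from rfl, this.deriv]
  rw [hφ0]
  have ht' := ht.ne'
  field_simp
  ring

lemma hiter_two (f : ℝ → ℝ) : iteratedDeriv 2 f = deriv (deriv f) := by
  rw [show (2:ℕ) = 0 + 1 + 1 from rfl, iteratedDeriv_succ, iteratedDeriv_succ,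
    iteratedDeriv_zero]

/-- Hopf lemma argument, Remark 1.2: if `V` is continuous, radial and radially
non-decreasing near `0`, and `Υ ∈ C³` is a positive radial solution of `−ΔΥ + VΥ = μ₁Υ³`
with a strict local maximum at the origin, then `∂²_{ii}Υ(0) < 0` for every `i`;
in particular `ΔΥ(0) ≠ 0`. -/
theorem stmt2 {N : ℕ} (hN : 0 < N) (V Υ : EuclideanSpace ℝ (Fin N) → ℝ) (μ₁ : ℝ)
    (hμ₁ : 0 < μ₁)
    (hVc : Continuous V)
    (hVrad : ∀ x y : EuclideanSpace ℝ (Fin N), ‖x‖ = ‖y‖ → V x = V y)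
    (hVmono : ∃ r₀ > (0 : ℝ), ∀ x y : EuclideanSpace ℝ (Fin N),
      ‖x‖ ≤ ‖y‖ → ‖y‖ ≤ r₀ → V x ≤ V y)
    (hΥ : ContDiff ℝ 3 Υ) (hΥpos : ∀ x, 0 < Υ x)
    (hΥrad : ∀ x y : EuclideanSpace ℝ (Fin N), ‖x‖ = ‖y‖ → Υ x = Υ y)
    (heq : ∀ x, -lap Υ x + V x * Υ x = μ₁ * (Υ x) ^ 3)
    (hmax : ∃ r > (0 : ℝ), ∀ x : EuclideanSpace ℝ (Fin N), x ≠ 0 → ‖x‖ < r → Υ x < Υ 0) :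
    (∀ i : Fin N,
      iteratedDeriv 2 (fun t : ℝ => Υ (t • EuclideanSpace.single i 1)) 0 < 0) ∧
    lap Υ 0 ≠ 0 := by
  obtain ⟨r₀, hr₀, hV⟩ := hVmono
  obtain ⟨r, hr, hmax'⟩ := hmax
  have i₀ : Fin N := ⟨0, hN⟩
  have hse : ∀ (j : Fin N) (t : ℝ), ‖t • EuclideanSpace.single j (1:ℝ)‖ = |t| := by
    intro j t
    rw [norm_smul, EuclideanSpace.norm_single]
    simp
  obtain ⟨g, hg_eq⟩ : ∃ g : ℝ → ℝ,
      ∀ (j : Fin N) (t : ℝ), Υ (t • EuclideanSpace.single j (1:ℝ)) = g t := by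
    refine ⟨fun t => Υ (t • EuclideanSpace.single i₀ (1:ℝ)), fun j t => ?_⟩
    exact hΥrad _ _ (by rw [hse, hse])
  have hgfun : g = fun t => Υ (t • EuclideanSpace.single i₀ (1:ℝ)) :=
    funext fun t => (hg_eq i₀ t).symm
  have hgC3 : ContDiff ℝ 3 g := by
    rw [hgfun]
    exact hΥ.comp (contDiff_id.smul contDiff_const)
  have hg1 := auxD1 hgC3
  have hg1d : Differentiable ℝ (deriv g) := hg1.differentiable (by norm_num)
  have hg0 : g 0 = Υ 0 := by rw [← hg_eq i₀ 0, zero_smul]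
  have hsne : ∀ j : Fin N, EuclideanSpace.single j (1:ℝ) ≠ 0 := by
    intro j h
    have := EuclideanSpace.norm_single (𝕜 := ℝ) j 1
    rw [h] at this
    simp at this
  have hlt : ∀ t : ℝ, t ≠ 0 → |t| < r → g t < g 0 := by
    intro t ht htr
    rw [hg0, ← hg_eq i₀ t]
    exact hmax' _ (smul_ne_zero ht (hsne i₀)) (by rw [hse]; exact htr)
  have hg'0 : deriv g 0 = 0 := by
    apply IsLocalMax.deriv_eq_zero
    have hmem : Set.Ioo (-r) r ∈ 𝓝 (0:ℝ) := Ioo_mem_nhds (by linarith) hr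
    filter_upwards [hmem] with t ht
    rcases eq_or_ne t 0 with h | h
    · rw [h]
    · exact (hlt t h (abs_lt.2 ⟨ht.1, ht.2⟩)).le
  -- norms of off-axis combinations
  have hnorm2 : ∀ (j : Fin N), j ≠ i₀ → ∀ (t s : ℝ),
      ‖t • EuclideanSpace.single i₀ (1:ℝ) + s • EuclideanSpace.single j (1:ℝ)‖
        = Real.sqrt (t ^ 2 + s ^ 2) := by
    intro j hj t s
    have hinner : inner ℝ (t • EuclideanSpace.single i₀ (1:ℝ))
        (s • EuclideanSpace.single j (1:ℝ)) = (0:ℝ) := by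
      rw [real_inner_smul_left, real_inner_smul_right]
      have h0 : inner ℝ (EuclideanSpace.single i₀ (1:ℝ))
          (EuclideanSpace.single j (1:ℝ)) = (0:ℝ) := by
        rw [EuclideanSpace.inner_single_left]
        simp [EuclideanSpace.single_apply, Ne.symm hj]
      rw [h0]
      ring
    have hsq : ‖t • EuclideanSpace.single i₀ (1:ℝ) + s • EuclideanSpace.single j (1:ℝ)‖ ^ 2
        = t ^ 2 + s ^ 2 := by
      rw [norm_add_sq_real, hinner, hse, hse]
      rw [sq_abs, sq_abs]
      ring
    rw [← Real.sqrt_sq (norm_nonneg _), hsq]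
  -- Laplacian along the axis
  have hlap : ∀ t : ℝ, 0 < t →
      lap Υ (t • EuclideanSpace.single i₀ (1:ℝ))
        = deriv (deriv g) t + ((N - 1 : ℕ) : ℝ) * (deriv g t / t) := by
    intro t ht
    have hDmain : iteratedDeriv 2
        (fun s : ℝ => Υ (t • EuclideanSpace.single i₀ (1:ℝ)
          + s • EuclideanSpace.single i₀ (1:ℝ))) 0 = deriv (deriv g) t := by
      have hmain : (fun s : ℝ => Υ (t • EuclideanSpace.single i₀ (1:ℝ)
          + s • EuclideanSpace.single i₀ (1:ℝ))) = fun s => g (t + s) := by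
        funext s
        rw [← hg_eq i₀ (t + s), add_smul]
      rw [hiter_two, hmain]
      have h1 : deriv (fun s : ℝ => g (t + s)) = fun s => deriv g (t + s) := by
        funext s
        exact deriv_comp_const_add g t s
      rw [h1]
      have h2 := deriv_comp_const_add (deriv g) t 0
      rw [h2, add_zero]
    have hDoff : ∀ j : Fin N, j ≠ i₀ →
        iteratedDeriv 2 (fun s : ℝ => Υ (t • EuclideanSpace.single i₀ (1:ℝ)
          + s • EuclideanSpace.single j (1:ℝ))) 0 = deriv g t / t := by
      intro j hj
      have hfe : (fun s : ℝ => Υ (t • EuclideanSpace.single i₀ (1:ℝ)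
          + s • EuclideanSpace.single j (1:ℝ)))
          = fun s => g (Real.sqrt (t ^ 2 + s ^ 2)) := by
        funext s
        rw [← hg_eq i₀ (Real.sqrt (t ^ 2 + s ^ 2))]
        apply hΥrad
        rw [hnorm2 j hj t s, hse, abs_of_nonneg (Real.sqrt_nonneg _)]
      rw [hiter_two, hfe]
      exact aux2 hgC3 ht
    simp only [lap]
    rw [← Finset.sum_erase_add _ _ (Finset.mem_univ i₀), hDmain]
    rw [Finset.sum_congr rfl (fun j hj => hDoff j (Finset.ne_of_mem_erase hj))]
    rw [Finset.sum_const, Finset.card_erase_of_mem (Finset.mem_univ i₀),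
      Finset.card_univ, Fintype.card_fin, nsmul_eq_mul]
    ring
  -- Laplacian at the origin
  have hlap0 : lap Υ 0 = (N : ℝ) * deriv (deriv g) 0 := by
    simp only [lap]
    have hterm : ∀ j : Fin N,
        iteratedDeriv 2 (fun s : ℝ => Υ ((0 : EuclideanSpace ℝ (Fin N))
          + s • EuclideanSpace.single j 1)) 0 = deriv (deriv g) 0 := by
      intro j
      have : (fun s : ℝ => Υ ((0 : EuclideanSpace ℝ (Fin N))
          + s • EuclideanSpace.single j 1)) = g := by
        funext s
        rw [zero_add, hg_eq j s]
      rw [this, hiter_two]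
    rw [Finset.sum_congr rfl (fun j _ => hterm j), Finset.sum_const,
      Finset.card_univ, Fintype.card_fin, nsmul_eq_mul]
  -- key negativity
  have hA : deriv (deriv g) 0 < 0 := by
    by_contra hA
    push_neg at hA
    have hV0 : μ₁ * Υ 0 ^ 2 ≤ V 0 := by
      have h := heq 0
      rw [hlap0] at h
      have hp := hΥpos 0
      have hNA : 0 ≤ (N:ℝ) * deriv (deriv g) 0 :=
        mul_nonneg (Nat.cast_nonneg N) hA
      nlinarith
    have hδ : 0 < min r r₀ := lt_min hr hr₀
    have hposlap : ∀ t ∈ Set.Ioo (0:ℝ) (min r r₀),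
        0 < deriv (deriv g) t + ((N - 1 : ℕ) : ℝ) * (deriv g t / t) := by
      intro t htm
      rw [← hlap t htm.1]
      set x := t • EuclideanSpace.single i₀ (1:ℝ) with hx
      have hxn : ‖x‖ = t := by rw [hx, hse, abs_of_pos htm.1]
      have hxne : x ≠ 0 := smul_ne_zero (ne_of_gt htm.1) (hsne i₀)
      have h1 : Υ x < Υ 0 := hmax' x hxne
        (by rw [hxn]; exact lt_of_lt_of_le htm.2 (min_le_left r r₀))
      have h2 : V 0 ≤ V x := by
        apply hV 0 x
        · rw [norm_zero, hxn]; exact htm.1.le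
        · rw [hxn]; exact (lt_of_lt_of_le htm.2 (min_le_right r r₀)).le
      have h3 := heq x
      have hpx := hΥpos x
      have hp0 := hΥpos 0
      nlinarith [mul_pos (mul_pos (mul_pos hμ₁ hpx) (sub_pos.2 h1))
          (show (0:ℝ) < Υ 0 + Υ x by linarith),
        mul_le_mul_of_nonneg_right h2 hpx.le,
        mul_le_mul_of_nonneg_right hV0 hpx.le]
    obtain ⟨t, htm, hgt⟩ := aux1 hgC3 (N - 1) hδ hg'0 hposlap
    have : g t < g 0 := hlt t (ne_of_gt htm.1)
      (by rw [abs_of_pos htm.1]; exact lt_of_lt_of_le htm.2 (min_le_left r r₀))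
    linarith
  constructor
  · intro i
    have hfun : (fun t : ℝ => Υ (t • EuclideanSpace.single i 1)) = g :=
      funext fun t => hg_eq i t
    rw [hfun, hiter_two]
    exact hA
  · rw [hlap0]
    have hNpos : (0:ℝ) < (N:ℝ) := by exact_mod_cast hN
    exact ne_of_lt (mul_neg_of_pos_of_neg hNpos hA)
end

section
/- Let u, v : ℝ^N → ℝ be positive continuous radial functions with u(x) ~ |x|^a e^{−b|x|} and v(x) ~ |x|^{a'} e^{−b'|x|} as |x| → ∞, where b, b' > 0 and b < b'. Then as |ξ| → ∞, ∫_{ℝ^N} u(x − ξ) v(x) dx ~ C e^{−b|ξ|} |ξ|^a for some constant C > 0. -/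
open MeasureTheory Filter Topology

lemma aux_bdd (p c R : ℝ) (hc : 0 < c) (hR : 0 < R) :
    ∃ M, 0 < M ∧ ∀ s, R ≤ s → s ^ p * Real.exp (-(c * s)) ≤ M := by
  have h0 := tendsto_rpow_mul_exp_neg_mul_atTop_nhds_zero p c hc
  have h1 : ∀ᶠ x in atTop, x ^ p * Real.exp (-c * x) < 1 :=
    h0.eventually_lt_const one_pos
  obtain ⟨S, hS⟩ := eventually_atTop.1 h1
  set S' := max S R with hS'
  have hcont : ContinuousOn (fun s : ℝ => s ^ p * Real.exp (-(c * s))) (Set.Icc R S') := by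
    intro s hs
    have hs0 : s ≠ 0 := ne_of_gt (lt_of_lt_of_le hR hs.1)
    exact ((Real.continuousAt_rpow_const s p (Or.inl hs0)).mul
      ((Real.continuous_exp.comp (by continuity)).continuousAt)).continuousWithinAt
  have hne : (Set.Icc R S').Nonempty := ⟨R, le_refl R, le_max_right _ _⟩
  obtain ⟨m, hm, hmax⟩ := isCompact_Icc.exists_isMaxOn hne hcont
  refine ⟨max (m ^ p * Real.exp (-(c * m))) 1, lt_of_lt_of_le one_pos (le_max_right _ _), ?_⟩
  intro s hs
  rcases le_or_gt s S' with h | h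
  · exact le_trans (hmax ⟨hs, h⟩) (le_max_left _ _)
  · have : s ^ p * Real.exp (-c * s) < 1 := hS s (le_trans (le_max_left S R) h.le)
    rw [neg_mul] at this
    exact le_trans this.le (le_max_right _ _)

lemma aux_tendsto_cocompact {α : Type*} {N : ℕ} {l : Filter α}
    {f : α → EuclideanSpace ℝ (Fin N)}
    (h : Tendsto (fun i => ‖f i‖) l atTop) :
    Tendsto f l (cocompact (EuclideanSpace ℝ (Fin N))) := by
  rw [← Metric.cobounded_eq_cocompact]
  exact tendsto_norm_atTop_iff_cobounded.mp h

lemma aux_bound_exact {N : ℕ} {w : EuclideanSpace ℝ (Fin N) → ℝ} {p c cw : ℝ} (hcw : 0 < cw)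
    (h : Tendsto (fun x : EuclideanSpace ℝ (Fin N) =>
        w x / (‖x‖ ^ p * Real.exp (-c * ‖x‖))) (cocompact (EuclideanSpace ℝ (Fin N))) (𝓝 cw)) :
    ∃ R K : ℝ, 1 ≤ R ∧ 0 < K ∧
      ∀ x : EuclideanSpace ℝ (Fin N), R ≤ ‖x‖ →
        w x ≤ K * (‖x‖ ^ p * Real.exp (-c * ‖x‖)) := by
  have hev : ∀ᶠ x in cocompact (EuclideanSpace ℝ (Fin N)),
      w x / (‖x‖ ^ p * Real.exp (-c * ‖x‖)) < cw + 1 :=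
    h.eventually_lt_const (lt_add_one cw)
  rw [← Metric.cobounded_eq_cocompact] at hev
  obtain ⟨i, -, hi⟩ := (Filter.hasBasis_cobounded_norm.eventually_iff).1 hev
  refine ⟨max i 1, cw + 1, le_max_right _ _, by linarith, ?_⟩
  intro x hx
  have hx1 : (1:ℝ) ≤ ‖x‖ := le_trans (le_max_right i 1) hx
  have hρ : 0 < ‖x‖ ^ p * Real.exp (-c * ‖x‖) :=
    mul_pos (Real.rpow_pos_of_pos (by linarith) p) (Real.exp_pos _)
  have := hi (le_trans (le_max_left i 1) hx)
  rw [div_lt_iff₀ hρ] at this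
  exact this.le


lemma aux_bound_global {N : ℕ} {w : EuclideanSpace ℝ (Fin N) → ℝ} {p c cw : ℝ}
    (hcw : 0 < cw) (hw : Continuous w)
    (h : Tendsto (fun x : EuclideanSpace ℝ (Fin N) =>
        w x / (‖x‖ ^ p * Real.exp (-c * ‖x‖))) (cocompact (EuclideanSpace ℝ (Fin N))) (𝓝 cw))
    {δ : ℝ} (hδ : 0 < δ) (hδc : δ < c) :
    ∃ M, 0 < M ∧ ∀ x : EuclideanSpace ℝ (Fin N),
      w x ≤ M * Real.exp (-((c - δ) * ‖x‖)) := by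
  obtain ⟨R, K, hR1, hK, hbd⟩ := aux_bound_exact hcw h
  obtain ⟨M₁, hM₁, hM₁bd⟩ := aux_bdd p δ R hδ (by linarith)
  obtain ⟨C, hC⟩ := (isCompact_closedBall (0 : EuclideanSpace ℝ (Fin N)) R).exists_bound_of_continuousOn
    hw.continuousOn
  set M := max (K * M₁) ((C + 1) * Real.exp ((c - δ) * R)) with hM
  refine ⟨M, lt_of_lt_of_le (mul_pos hK hM₁) (le_max_left _ _), ?_⟩
  intro x
  rcases le_or_gt R ‖x‖ with hx | hx
  · have h1 : w x ≤ K * (‖x‖ ^ p * Real.exp (-c * ‖x‖)) := hbd x hx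
    have h2 : ‖x‖ ^ p * Real.exp (-c * ‖x‖)
        = (‖x‖ ^ p * Real.exp (-(δ * ‖x‖))) * Real.exp (-((c - δ) * ‖x‖)) := by
      rw [mul_assoc, ← Real.exp_add]; ring_nf
    have h3 : ‖x‖ ^ p * Real.exp (-(δ * ‖x‖)) ≤ M₁ := hM₁bd _ hx
    calc w x ≤ K * ((‖x‖ ^ p * Real.exp (-(δ * ‖x‖))) * Real.exp (-((c - δ) * ‖x‖))) := by
              rw [← h2]; exact h1
      _ = (K * (‖x‖ ^ p * Real.exp (-(δ * ‖x‖)))) * Real.exp (-((c - δ) * ‖x‖)) := by ring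
      _ ≤ (K * M₁) * Real.exp (-((c - δ) * ‖x‖)) :=
          mul_le_mul_of_nonneg_right (mul_le_mul_of_nonneg_left h3 hK.le) (Real.exp_pos _).le
      _ ≤ M * Real.exp (-((c - δ) * ‖x‖)) :=
          mul_le_mul_of_nonneg_right (le_max_left _ _) (Real.exp_pos _).le
  · have h1 : w x ≤ C + 1 := by
      have := hC x (by simpa [Metric.mem_closedBall, dist_eq_norm] using hx.le)
      have h2 : w x ≤ |w x| := le_abs_self _
      rw [Real.norm_eq_abs] at this
      linarith
    have h2 : Real.exp ((c - δ) * ‖x‖) ≤ Real.exp ((c - δ) * R) := by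
      apply Real.exp_le_exp.2
      have : (0:ℝ) ≤ c - δ := by linarith
      nlinarith [norm_nonneg x]
    have hCpos : (0:ℝ) < C + 1 := by
      have := hC 0 (by simp [hR1]; linarith)
      have h0 : (0:ℝ) ≤ ‖w 0‖ := norm_nonneg _
      linarith
    calc w x ≤ C + 1 := h1
      _ = ((C + 1) * Real.exp ((c - δ) * ‖x‖)) * Real.exp (-((c - δ) * ‖x‖)) := by
          rw [mul_assoc, ← Real.exp_add]; simp
      _ ≤ ((C + 1) * Real.exp ((c - δ) * R)) * Real.exp (-((c - δ) * ‖x‖)) := by gcongr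
      _ ≤ M * Real.exp (-((c - δ) * ‖x‖)) := by gcongr; exact le_max_right _ _

lemma aux_integrable_exp {N : ℕ} {c : ℝ} (hc : 0 < c) :
    Integrable (fun x : EuclideanSpace ℝ (Fin N) => Real.exp (-(c * ‖x‖))) := by
  set r : ℝ := (Module.finrank ℝ (EuclideanSpace ℝ (Fin N)) : ℝ) + 1 with hr
  have hrpos : 0 < r := by positivity
  obtain ⟨M, hM, hMbd⟩ := aux_bdd r c 1 hc one_pos
  have hint : Integrable (fun x : EuclideanSpace ℝ (Fin N) => ((1:ℝ) + ‖x‖) ^ (-r)) :=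
    integrable_one_add_norm (by rw [hr]; linarith)
  apply Integrable.mono' (hint.const_mul (Real.exp c * M))
  · exact (Real.continuous_exp.comp (by continuity)).aestronglyMeasurable
  · refine Filter.Eventually.of_forall fun x => ?_
    have h1x : (0:ℝ) < 1 + ‖x‖ := by positivity
    rw [Real.norm_eq_abs, abs_of_pos (Real.exp_pos _), Real.rpow_neg h1x.le,
      mul_comm (Real.exp c * M), ← div_eq_inv_mul, le_div_iff₀ (Real.rpow_pos_of_pos h1x r)]
    have := hMbd (1 + ‖x‖) (by linarith [norm_nonneg x])
    have hsplit : Real.exp (-(c * ‖x‖)) = Real.exp c * Real.exp (-(c * (1 + ‖x‖))) := by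
      rw [← Real.exp_add]; ring_nf
    calc Real.exp (-(c * ‖x‖)) * (1 + ‖x‖) ^ r
        = Real.exp c * ((1 + ‖x‖) ^ r * Real.exp (-(c * (1 + ‖x‖)))) := by rw [hsplit]; ring
      _ ≤ Real.exp c * M := by gcongr


lemma aux_norm_facts {N : ℕ} (e₁ x : EuclideanSpace ℝ (Fin N)) (he₁ : ‖e₁‖ = 1) :
    Tendsto (fun t : ℝ => ‖x - t • e₁‖) atTop atTop ∧
    Tendsto (fun t : ℝ => ‖x - t • e₁‖ / t) atTop (𝓝 1) ∧
    Tendsto (fun t : ℝ => ‖x - t • e₁‖ - t) atTop (𝓝 (-(inner ℝ x e₁ : ℝ))) := by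
  have hdist : ∀ t : ℝ, 0 ≤ t → |‖x - t • e₁‖ - t| ≤ ‖x‖ := by
    intro t ht
    have h1 : ‖t • e₁‖ = t := by
      rw [norm_smul, he₁, mul_one, Real.norm_eq_abs, abs_of_nonneg ht]
    have := abs_norm_sub_norm_le (x - t • e₁) (-(t • e₁))
    rw [norm_neg, h1, sub_neg_eq_add, sub_add_cancel] at this
    exact this
  have hlow : ∀ᶠ t : ℝ in atTop, t - ‖x‖ ≤ ‖x - t • e₁‖ := by
    filter_upwards [eventually_ge_atTop (0:ℝ)] with t ht
    have := (abs_le.1 (hdist t ht)).1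
    linarith
  have hupp : ∀ᶠ t : ℝ in atTop, ‖x - t • e₁‖ ≤ t + ‖x‖ := by
    filter_upwards [eventually_ge_atTop (0:ℝ)] with t ht
    have := (abs_le.1 (hdist t ht)).2
    linarith
  have hnt : Tendsto (fun t : ℝ => ‖x - t • e₁‖) atTop atTop := by
    apply tendsto_atTop_mono' _ hlow
    exact tendsto_atTop_add_const_right _ _ tendsto_id
  have hratio : Tendsto (fun t : ℝ => ‖x - t • e₁‖ / t) atTop (𝓝 1) := by
    have hl : Tendsto (fun t : ℝ => 1 - ‖x‖ / t) atTop (𝓝 1) := by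
      have := (Filter.Tendsto.const_div_atTop tendsto_id ‖x‖)
      simpa using tendsto_const_nhds.sub this
    have hu : Tendsto (fun t : ℝ => 1 + ‖x‖ / t) atTop (𝓝 1) := by
      have := (Filter.Tendsto.const_div_atTop tendsto_id ‖x‖)
      simpa using tendsto_const_nhds.add this
    apply tendsto_of_tendsto_of_tendsto_of_le_of_le' hl hu
    · filter_upwards [hlow, eventually_gt_atTop (0:ℝ)] with t h1 ht
      rw [le_div_iff₀ ht]
      have h2 : ‖x‖ / t * t = ‖x‖ := div_mul_cancel₀ _ ht.ne'
      nlinarith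
    · filter_upwards [hupp, eventually_gt_atTop (0:ℝ)] with t h1 ht
      rw [div_le_iff₀ ht, add_mul, div_mul_cancel₀ _ ht.ne']
      nlinarith
  refine ⟨hnt, hratio, ?_⟩
  have hsq : ∀ t : ℝ, 0 ≤ t →
      ‖x - t • e₁‖ ^ 2 = ‖x‖ ^ 2 - 2 * (t * (inner ℝ x e₁ : ℝ)) + t ^ 2 := by
    intro t ht
    have h1 : ‖t • e₁‖ = t := by
      rw [norm_smul, he₁, mul_one, Real.norm_eq_abs, abs_of_nonneg ht]
    rw [norm_sub_sq_real, real_inner_smul_right, h1]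
    try ring
  have hkey : ∀ᶠ t : ℝ in atTop,
      (‖x‖ ^ 2 / t - 2 * (inner ℝ x e₁ : ℝ)) / (‖x - t • e₁‖ / t + 1)
        = ‖x - t • e₁‖ - t := by
    filter_upwards [eventually_gt_atTop (0:ℝ)] with t ht
    set I : ℝ := (inner ℝ x e₁ : ℝ) with hI
    set n : ℝ := ‖x - t • e₁‖ with hn
    have hn0 : 0 ≤ n := norm_nonneg _
    have hden : 0 < n + t := by linarith
    have h2 : (n - t) * (n + t) = ‖x‖ ^ 2 - 2 * (t * I) := by
      have := hsq t ht.le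
      nlinarith [this]
    have e1 : n / t + 1 = (n + t) / t := by rw [add_div, div_self ht.ne']
    have e2 : ‖x‖ ^ 2 / t - 2 * I = (‖x‖ ^ 2 - 2 * (t * I)) / t := by
      rw [sub_div]
      congr 1
      rw [mul_comm t I, ← mul_assoc, mul_div_assoc, div_self ht.ne', mul_one]
    rw [e1, e2, div_div_div_cancel_right₀ ht.ne' _ _, ← h2,
      mul_div_assoc, div_self hden.ne', mul_one]
  have hnum : Tendsto (fun t : ℝ => ‖x‖ ^ 2 / t - 2 * (inner ℝ x e₁ : ℝ)) atTop
      (𝓝 (0 - 2 * (inner ℝ x e₁ : ℝ))) :=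
    (Filter.Tendsto.const_div_atTop tendsto_id _).sub_const _
  have hden : Tendsto (fun t : ℝ => ‖x - t • e₁‖ / t + 1) atTop (𝓝 (1 + 1)) :=
    hratio.add_const 1
  have := hnum.div hden (by norm_num)
  rw [show (0 - 2 * (inner ℝ x e₁ : ℝ)) / (1 + 1) = -(inner ℝ x e₁ : ℝ) by ring] at this
  exact this.congr' hkey


lemma aux_pointwise {N : ℕ} {u : EuclideanSpace ℝ (Fin N) → ℝ} {a b cu : ℝ}
    (hua : Tendsto (fun x : EuclideanSpace ℝ (Fin N) =>
        u x / (‖x‖ ^ a * Real.exp (-b * ‖x‖)))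
      (cocompact (EuclideanSpace ℝ (Fin N))) (𝓝 cu))
    (e₁ x : EuclideanSpace ℝ (Fin N)) (he₁ : ‖e₁‖ = 1) :
    Tendsto (fun t : ℝ => u (x - t • e₁) / (Real.exp (-b * t) * t ^ a)) atTop
      (𝓝 (cu * Real.exp (b * (inner ℝ x e₁ : ℝ)))) := by
  obtain ⟨hnt, hratio, hdiff⟩ := aux_norm_facts e₁ x he₁
  have h1 : Tendsto (fun t : ℝ => u (x - t • e₁)
      / (‖x - t • e₁‖ ^ a * Real.exp (-b * ‖x - t • e₁‖))) atTop (𝓝 cu) :=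
    hua.comp (aux_tendsto_cocompact hnt)
  have h2 : Tendsto (fun t : ℝ => (‖x - t • e₁‖ / t) ^ a) atTop (𝓝 1) := by
    have hc := (Real.continuousAt_rpow_const 1 a (Or.inl one_ne_zero)).tendsto.comp hratio
    rw [Real.one_rpow] at hc
    exact hc
  have hd : Tendsto (fun t : ℝ => t - ‖x - t • e₁‖) atTop (𝓝 (inner ℝ x e₁ : ℝ)) := by
    have := hdiff.neg
    rw [neg_neg] at this
    exact this.congr fun t => by ring
  have h3 : Tendsto (fun t : ℝ => Real.exp (b * (t - ‖x - t • e₁‖))) atTop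
      (𝓝 (Real.exp (b * (inner ℝ x e₁ : ℝ)))) :=
    (Real.continuous_exp.tendsto _).comp (hd.const_mul b)
  have hprod := h1.mul (h2.mul h3)
  rw [show cu * (1 * Real.exp (b * (inner ℝ x e₁ : ℝ)))
      = cu * Real.exp (b * (inner ℝ x e₁ : ℝ)) by ring] at hprod
  apply hprod.congr'
  filter_upwards [eventually_gt_atTop (max 0 ‖x‖)] with t ht
  have ht0 : 0 < t := lt_of_le_of_lt (le_max_left _ _) ht
  have hn0 : 0 < ‖x - t • e₁‖ := by
    have h1t : ‖t • e₁‖ = t := by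
      rw [norm_smul, he₁, mul_one, Real.norm_eq_abs, abs_of_nonneg ht0.le]
    have := abs_norm_sub_norm_le (x - t • e₁) (-(t • e₁))
    rw [norm_neg, h1t, sub_neg_eq_add, sub_add_cancel] at this
    have h2t := (abs_le.1 this).1
    have := lt_of_le_of_lt (le_max_right 0 ‖x‖) ht
    linarith
  set n : ℝ := ‖x - t • e₁‖ with hn
  have hna : (0:ℝ) < n ^ a := Real.rpow_pos_of_pos hn0 a
  have hta : (0:ℝ) < t ^ a := Real.rpow_pos_of_pos ht0 a
  have hE : Real.exp (b * (t - n)) * Real.exp (-(b * t)) = Real.exp (-(b * n)) := by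
    rw [← Real.exp_add]; ring_nf
  rw [Real.div_rpow (norm_nonneg _) ht0.le]
  rw [div_mul_eq_mul_div, div_mul_eq_mul_div, mul_div_assoc, div_div]
  simp only [neg_mul]
  field_simp
  linear_combination u (x - t • e₁) * n ^ a * hE


lemma aux_rpow_band {a s t : ℝ} (ht : 0 < t) (h1 : t/2 ≤ s) (h2 : s ≤ 3*t/2) :
    s ^ a ≤ max ((1/2:ℝ) ^ a) ((3/2:ℝ) ^ a) * t ^ a := by
  have hs : 0 < s := lt_of_lt_of_le (by positivity) h1
  have hst : s = (s/t) * t := (div_mul_cancel₀ _ ht.ne').symm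
  have hmul : s ^ a = (s/t) ^ a * t ^ a := by
    rw [← Real.mul_rpow (by positivity) ht.le, ← hst]
  rw [hmul]
  have hta : (0:ℝ) ≤ t ^ a := (Real.rpow_pos_of_pos ht a).le
  apply mul_le_mul_of_nonneg_right _ hta
  rcases le_or_gt 0 a with ha | ha
  · refine le_trans (Real.rpow_le_rpow (by positivity) ?_ ha) (le_max_right _ _)
    rw [div_le_iff₀ ht]; linarith
  · refine le_trans (Real.rpow_le_rpow_of_nonpos (by norm_num) ?_ ha.le) (le_max_left _ _)
    rw [le_div_iff₀ ht]; linarith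

lemma aux_lower_norm {N : ℕ} {e₁ : EuclideanSpace ℝ (Fin N)} (he₁ : ‖e₁‖ = 1)
    (x : EuclideanSpace ℝ (Fin N)) {t : ℝ} (ht : 0 ≤ t) :
    t - ‖x‖ ≤ ‖x - t • e₁‖ ∧ ‖x - t • e₁‖ ≤ t + ‖x‖ := by
  have h1 : ‖t • e₁‖ = t := by
    rw [norm_smul, he₁, mul_one, Real.norm_eq_abs, abs_of_nonneg ht]
  have := abs_norm_sub_norm_le (x - t • e₁) (-(t • e₁))
  rw [norm_neg, h1, sub_neg_eq_add, sub_add_cancel] at this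
  constructor <;> [linarith [(abs_le.1 this).1]; linarith [(abs_le.1 this).2]]

lemma aux_domination {N : ℕ} {u v : EuclideanSpace ℝ (Fin N) → ℝ} {a a' b b' cu cv : ℝ}
    (hb : 0 < b) (hbb' : b < b')
    (hu : Continuous u) (hv : Continuous v)
    (hupos : ∀ x, 0 < u x) (hvpos : ∀ x, 0 < v x)
    (hcu : 0 < cu) (hcv : 0 < cv)
    (hua : Tendsto (fun x : EuclideanSpace ℝ (Fin N) =>
        u x / (‖x‖ ^ a * Real.exp (-b * ‖x‖)))
      (cocompact (EuclideanSpace ℝ (Fin N))) (𝓝 cu))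
    (hva : Tendsto (fun x : EuclideanSpace ℝ (Fin N) =>
        v x / (‖x‖ ^ a' * Real.exp (-b' * ‖x‖)))
      (cocompact (EuclideanSpace ℝ (Fin N))) (𝓝 cv))
    {e₁ : EuclideanSpace ℝ (Fin N)} (he₁ : ‖e₁‖ = 1) :
    ∃ T G : ℝ, 1 ≤ T ∧ 0 < G ∧ ∀ t : ℝ, T ≤ t → ∀ x : EuclideanSpace ℝ (Fin N),
      u (x - t • e₁) * v x / (Real.exp (-b * t) * t ^ a)
        ≤ G * Real.exp (-((b' - b)/4 * ‖x‖)) := by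
  have hε0 : (0:ℝ) < b' - b := by linarith
  set δ : ℝ := min ((b'-b)/16) (b/2) with hδdef
  have hδ0 : 0 < δ := lt_min (by linarith) (by linarith)
  have hδb : δ < b := lt_of_le_of_lt (min_le_right _ _) (by linarith)
  have hδε : δ ≤ (b'-b)/16 := min_le_left _ _
  obtain ⟨R, K, hR1, hK, hexact⟩ := aux_bound_exact hcu hua
  obtain ⟨Mu, hMu, hMubd⟩ := aux_bound_global hcu hu hua hδ0 hδb
  obtain ⟨Mv, hMv, hMvbd⟩ := aux_bound_global hcv hv hva
    (show (0:ℝ) < (b'-b)/2 by linarith) (show (b'-b)/2 < b' by linarith)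
  set ca : ℝ := max ((1/2:ℝ) ^ a) ((3/2:ℝ) ^ a) with hca
  have hca0 : 0 < ca := lt_of_lt_of_le (Real.rpow_pos_of_pos one_half_pos a) (le_max_left _ _)
  obtain ⟨M₀, hM₀, hM₀bd⟩ := aux_bdd (-a) ((b'-b)/16) 1 (by linarith) one_pos
  refine ⟨max (2*R) 1, max (K * ca * Mv) (Mu * Mv * M₀), le_max_right _ _,
    lt_of_lt_of_le (by positivity) (le_max_left _ _), ?_⟩
  intro t hT x
  set G : ℝ := max (K * ca * Mv) (Mu * Mv * M₀) with hG
  have ht1 : (1:ℝ) ≤ t := le_trans (le_max_right _ _) hT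
  have ht0 : (0:ℝ) < t := by linarith
  have htR : 2*R ≤ t := le_trans (le_max_left _ _) hT
  have hta : (0:ℝ) < t ^ a := Real.rpow_pos_of_pos ht0 a
  have hD : (0:ℝ) < Real.exp (-b * t) * t ^ a := mul_pos (Real.exp_pos _) hta
  obtain ⟨hn1, hn2⟩ := aux_lower_norm he₁ x ht0.le
  rw [div_le_iff₀ hD]
  have hxnn : (0:ℝ) ≤ ‖x‖ := norm_nonneg x
  rcases le_or_gt ‖x‖ (t/2) with hc | hc
  · -- inner region
    have hnR : R ≤ ‖x - t • e₁‖ := by linarith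
    have hnlo : t/2 ≤ ‖x - t • e₁‖ := by linarith
    have hnhi : ‖x - t • e₁‖ ≤ 3*t/2 := by linarith
    have hu1 : u (x - t • e₁) ≤ K * (ca * t ^ a * Real.exp (-(b * (t - ‖x‖)))) := by
      refine le_trans (hexact _ hnR) (mul_le_mul_of_nonneg_left ?_ hK.le)
      have hr1 : ‖x - t • e₁‖ ^ a ≤ ca * t ^ a := aux_rpow_band ht0 hnlo hnhi
      have hr2 : Real.exp (-b * ‖x - t • e₁‖) ≤ Real.exp (-(b * (t - ‖x‖))) := by
        apply Real.exp_le_exp.2; nlinarith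
      exact mul_le_mul hr1 hr2 (Real.exp_pos _).le (by positivity)
    have hv1 : v x ≤ Mv * Real.exp (-((b' - (b'-b)/2) * ‖x‖)) := hMvbd x
    calc u (x - t • e₁) * v x
        ≤ (K * (ca * t ^ a * Real.exp (-(b * (t - ‖x‖)))))
            * (Mv * Real.exp (-((b' - (b'-b)/2) * ‖x‖))) :=
          mul_le_mul hu1 hv1 (hvpos x).le (by positivity)
      _ = (K * ca * Mv) * t ^ a
            * (Real.exp (-(b * (t - ‖x‖))) * Real.exp (-((b' - (b'-b)/2) * ‖x‖))) := by ring
      _ ≤ (K * ca * Mv) * t ^ a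
            * (Real.exp (-((b'-b)/4 * ‖x‖)) * Real.exp (-b * t)) := by
          apply mul_le_mul_of_nonneg_left _ (by positivity)
          rw [← Real.exp_add, ← Real.exp_add]
          apply Real.exp_le_exp.2
          nlinarith [mul_nonneg hε0.le hxnn]
      _ ≤ G * Real.exp (-((b' - b)/4 * ‖x‖)) * (Real.exp (-b * t) * t ^ a) := by
          calc (K * ca * Mv) * t ^ a
                * (Real.exp (-((b' - b)/4 * ‖x‖)) * Real.exp (-b * t))
              = (K * ca * Mv) * Real.exp (-((b' - b)/4 * ‖x‖))
                  * (Real.exp (-b * t) * t ^ a) := by ring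
            _ ≤ G * Real.exp (-((b' - b)/4 * ‖x‖)) * (Real.exp (-b * t) * t ^ a) := by
                apply mul_le_mul_of_nonneg_right _ hD.le
                exact mul_le_mul_of_nonneg_right (le_max_left _ _) (Real.exp_pos _).le
  · -- outer region
    have hu1 : u (x - t • e₁) ≤ Mu * Real.exp (-((b - δ) * (t - ‖x‖))) := by
      refine le_trans (hMubd _) (mul_le_mul_of_nonneg_left ?_ hMu.le)
      apply Real.exp_le_exp.2
      have hbδ : (0:ℝ) ≤ b - δ := by linarith
      nlinarith
    have hv1 : v x ≤ Mv * Real.exp (-((b' - (b'-b)/2) * ‖x‖)) := hMvbd x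
    have hexp : Real.exp (-((b - δ) * (t - ‖x‖))) * Real.exp (-((b' - (b'-b)/2) * ‖x‖))
        ≤ Real.exp (-((b'-b)/16 * t)) * Real.exp (-((b' - b)/4 * ‖x‖)) * Real.exp (-b * t) := by
      rw [← Real.exp_add, ← Real.exp_add, ← Real.exp_add]
      apply Real.exp_le_exp.2
      have h1 : δ * (t/2) ≤ δ * ‖x‖ := mul_le_mul_of_nonneg_left hc.le hδ0.le
      have h2 : (b'-b) * (t/2) ≤ (b'-b) * ‖x‖ := mul_le_mul_of_nonneg_left hc.le hε0.le
      have h3 : (0:ℝ) ≤ t * ((b'-b)/16 - δ) := mul_nonneg ht0.le (by linarith)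
      have h4 : (0:ℝ) ≤ (b'-b) * t := mul_nonneg (by linarith) ht0.le
      ring_nf
      ring_nf at h1 h2 h3 h4
      linarith [h1, h2, h3, h4]
    have hM0t : Real.exp (-((b'-b)/16 * t)) ≤ M₀ * t ^ a := by
      have h := hM₀bd t ht1
      rw [Real.rpow_neg ht0.le, inv_mul_le_iff₀ hta] at h
      linarith [h]
    calc u (x - t • e₁) * v x
        ≤ (Mu * Real.exp (-((b - δ) * (t - ‖x‖)))) * (Mv * Real.exp (-((b' - (b'-b)/2) * ‖x‖))) :=
          mul_le_mul hu1 hv1 (hvpos x).le (by positivity)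
      _ = (Mu * Mv) * (Real.exp (-((b - δ) * (t - ‖x‖))) * Real.exp (-((b' - (b'-b)/2) * ‖x‖))) := by
          ring
      _ ≤ (Mu * Mv) * (Real.exp (-((b'-b)/16 * t)) * Real.exp (-((b' - b)/4 * ‖x‖))
            * Real.exp (-b * t)) := mul_le_mul_of_nonneg_left hexp (by positivity)
      _ ≤ (Mu * Mv) * ((M₀ * t ^ a) * Real.exp (-((b' - b)/4 * ‖x‖)) * Real.exp (-b * t)) := by
          apply mul_le_mul_of_nonneg_left _ (by positivity)
          apply mul_le_mul_of_nonneg_right _ (Real.exp_pos _).le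
          exact mul_le_mul_of_nonneg_right hM0t (Real.exp_pos _).le
      _ = (Mu * Mv * M₀) * Real.exp (-((b' - b)/4 * ‖x‖)) * (Real.exp (-b * t) * t ^ a) := by
          ring
      _ ≤ G * Real.exp (-((b' - b)/4 * ‖x‖)) * (Real.exp (-b * t) * t ^ a) := by
          apply mul_le_mul_of_nonneg_right _ hD.le
          exact mul_le_mul_of_nonneg_right (le_max_right _ _) (Real.exp_pos _).le


lemma aux_atTop {N : ℕ} (hN : 0 < N) {u v : EuclideanSpace ℝ (Fin N) → ℝ}
    {a a' b b' cu cv : ℝ}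
    (hb : 0 < b) (hbb' : b < b')
    (hu : Continuous u) (hv : Continuous v)
    (hupos : ∀ x, 0 < u x) (hvpos : ∀ x, 0 < v x)
    (hcu : 0 < cu) (hcv : 0 < cv)
    (hua : Tendsto (fun x : EuclideanSpace ℝ (Fin N) =>
        u x / (‖x‖ ^ a * Real.exp (-b * ‖x‖)))
      (cocompact (EuclideanSpace ℝ (Fin N))) (𝓝 cu))
    (hva : Tendsto (fun x : EuclideanSpace ℝ (Fin N) =>
        v x / (‖x‖ ^ a' * Real.exp (-b' * ‖x‖)))
      (cocompact (EuclideanSpace ℝ (Fin N))) (𝓝 cv))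
    {e₁ : EuclideanSpace ℝ (Fin N)} (he₁ : ‖e₁‖ = 1) :
    ∃ C : ℝ, 0 < C ∧ Tendsto (fun t : ℝ =>
        (∫ x, u (x - t • e₁) * v x) / (Real.exp (-b * t) * t ^ a))
      atTop (𝓝 C) := by
  obtain ⟨T, G, hT1, hG, hdom⟩ := aux_domination hb hbb' hu hv hupos hvpos hcu hcv hua hva he₁
  set g : EuclideanSpace ℝ (Fin N) → ℝ := fun x => G * Real.exp (-((b' - b)/4 * ‖x‖)) with hg
  have hgint : Integrable g := (aux_integrable_exp (by linarith)).const_mul G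
  set h : EuclideanSpace ℝ (Fin N) → ℝ :=
    fun x => cu * Real.exp (b * (inner ℝ x e₁ : ℝ)) * v x with hh
  have hlim : ∀ x : EuclideanSpace ℝ (Fin N),
      Tendsto (fun t : ℝ => u (x - t • e₁) * v x / (Real.exp (-b * t) * t ^ a))
        atTop (𝓝 (h x)) := by
    intro x
    have := (aux_pointwise hua e₁ x he₁).mul_const (v x)
    apply this.congr
    intro t
    ring
  have hFmeas : ∀ t : ℝ, AEStronglyMeasurable
      (fun x : EuclideanSpace ℝ (Fin N) =>
        u (x - t • e₁) * v x / (Real.exp (-b * t) * t ^ a)) volume := by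
    intro t
    exact (((hu.comp (continuous_id.sub continuous_const)).mul hv).div_const _).aestronglyMeasurable
  have hbound : ∀ᶠ t : ℝ in atTop, ∀ᵐ x : EuclideanSpace ℝ (Fin N),
      ‖u (x - t • e₁) * v x / (Real.exp (-b * t) * t ^ a)‖ ≤ g x := by
    filter_upwards [eventually_ge_atTop T, eventually_gt_atTop (0:ℝ)] with t htT ht0
    refine Filter.Eventually.of_forall fun x => ?_
    have hpos : 0 ≤ u (x - t • e₁) * v x / (Real.exp (-b * t) * t ^ a) :=
      div_nonneg (mul_nonneg (hupos _).le (hvpos _).le)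
        (mul_nonneg (Real.exp_pos _).le (Real.rpow_pos_of_pos ht0 a).le)
    rw [Real.norm_eq_abs, abs_of_nonneg hpos]
    exact hdom t htT x
  have hdct := tendsto_integral_filter_of_dominated_convergence g
    (Filter.Eventually.of_forall hFmeas) hbound hgint
    (Filter.Eventually.of_forall hlim)
  have hint_h : Integrable h := by
    refine hgint.mono' ?_ ?_
    · exact ((continuous_const.mul (Real.continuous_exp.comp
        (continuous_const.mul (continuous_inner.comp
          (continuous_id.prodMk continuous_const))))).mul hv).aestronglyMeasurable
    · refine Filter.Eventually.of_forall fun x => ?_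
      have hhx : 0 < h x := by
        have := hvpos x
        positivity
      rw [Real.norm_eq_abs, abs_of_pos hhx]
      refine le_of_tendsto (hlim x) ?_
      filter_upwards [eventually_ge_atTop T] with t htT
      exact le_trans (le_abs_self _) (by
        rw [abs_of_nonneg (div_nonneg (mul_nonneg (hupos _).le (hvpos _).le)
          (mul_nonneg (Real.exp_pos _).le
            (Real.rpow_nonneg (le_trans (by linarith) htT) a)))]
        exact hdom t htT x)
  refine ⟨∫ x, h x, ?_, ?_⟩
  · rw [integral_pos_iff_support_of_nonneg_ae
      (Filter.Eventually.of_forall fun x => by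
        have := hvpos x
        have : 0 < h x := by positivity
        exact this.le) hint_h]
    have hsupp : Function.support h = Set.univ := by
      ext x
      simp only [Function.mem_support, Set.mem_univ, iff_true]
      have := hvpos x
      positivity
    rw [hsupp]
    exact isOpen_univ.measure_pos volume ⟨0, trivial⟩
  · apply hdct.congr
    intro t
    rw [integral_div]


lemma aux_rot {N : ℕ} {u v : EuclideanSpace ℝ (Fin N) → ℝ}
    (hurad : ∀ x y : EuclideanSpace ℝ (Fin N), ‖x‖ = ‖y‖ → u x = u y)
    (hvrad : ∀ x y : EuclideanSpace ℝ (Fin N), ‖x‖ = ‖y‖ → v x = v y)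
    {e₁ : EuclideanSpace ℝ (Fin N)} (he₁ : ‖e₁‖ = 1) (ξ : EuclideanSpace ℝ (Fin N)) :
    (∫ x, u (x - ξ) * v x) = ∫ x, u (x - ‖ξ‖ • e₁) * v x := by
  set η : EuclideanSpace ℝ (Fin N) := ‖ξ‖ • e₁ with hη
  have hnorm : ‖ξ‖ = ‖η‖ := by
    rw [hη, norm_smul, he₁, mul_one, Real.norm_eq_abs, abs_norm]
  set R := Submodule.reflection (ℝ ∙ (ξ - η))ᗮ with hR
  have hRξ : R ξ = η := Submodule.reflection_sub hnorm
  have hRη : R η = ξ := by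
    rw [← hRξ]
    exact Submodule.reflection_involutive _ ξ
  have key : ∀ x : EuclideanSpace ℝ (Fin N), u (R x - ξ) * v (R x) = u (x - η) * v x := by
    intro x
    have h1 : R x - ξ = R (x - η) := by rw [map_sub, hRη]
    have h2 : u (R x - ξ) = u (x - η) := by
      rw [h1]
      exact hurad _ _ (R.norm_map _)
    have h3 : v (R x) = v x := hvrad _ _ (R.norm_map _)
    rw [h2, h3]
  calc (∫ x, u (x - ξ) * v x)
      = ∫ x, u (R x - ξ) * v (R x) := (MeasureTheory.integral_comp R
          (fun y => u (y - ξ) * v y)).symm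
    _ = ∫ x, u (x - η) * v x := by
        congr 1
        funext x
        exact key x


/-- interaction integral, case `b < b'`: for positive continuous radial `u, v`
with `u(x) ~ |x|^a e^{−b|x|}`, `v(x) ~ |x|^{a'} e^{−b'|x|}` and `0 < b < b'`,
`∫ u(x−ξ) v(x) dx ~ C e^{−b|ξ|}|ξ|^a` as `|ξ| → ∞`. -/
theorem stmt5 {N : ℕ} (u v : EuclideanSpace ℝ (Fin N) → ℝ) (a a' b b' : ℝ)
    (hb : 0 < b) (hbb' : b < b')
    (hu : Continuous u) (hv : Continuous v)
    (hupos : ∀ x, 0 < u x) (hvpos : ∀ x, 0 < v x)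
    (hurad : ∀ x y : EuclideanSpace ℝ (Fin N), ‖x‖ = ‖y‖ → u x = u y)
    (hvrad : ∀ x y : EuclideanSpace ℝ (Fin N), ‖x‖ = ‖y‖ → v x = v y)
    (cu cv : ℝ) (hcu : 0 < cu) (hcv : 0 < cv)
    (hua : Tendsto (fun x : EuclideanSpace ℝ (Fin N) =>
        u x / (‖x‖ ^ a * Real.exp (-b * ‖x‖)))
      (cocompact (EuclideanSpace ℝ (Fin N))) (𝓝 cu))
    (hva : Tendsto (fun x : EuclideanSpace ℝ (Fin N) =>
        v x / (‖x‖ ^ a' * Real.exp (-b' * ‖x‖)))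
      (cocompact (EuclideanSpace ℝ (Fin N))) (𝓝 cv)) :
    ∃ C > (0 : ℝ), Tendsto (fun ξ : EuclideanSpace ℝ (Fin N) =>
        (∫ x, u (x - ξ) * v x) / (Real.exp (-b * ‖ξ‖) * ‖ξ‖ ^ a))
      (cocompact (EuclideanSpace ℝ (Fin N))) (𝓝 C) := by
  rcases Nat.eq_zero_or_pos N with hN0 | hN
  · subst hN0
    refine ⟨1, one_pos, ?_⟩
    have hzero : ∀ x : EuclideanSpace ℝ (Fin 0), x = 0 := fun x => PiLp.ext fun i => i.elim0
    have huniv : (Set.univ : Set (EuclideanSpace ℝ (Fin 0))) = {0} := by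
      ext y
      simp [hzero y]
    have : CompactSpace (EuclideanSpace ℝ (Fin 0)) :=
      ⟨by rw [huniv]; exact isCompact_singleton⟩
    rw [Filter.cocompact_eq_bot]
    exact tendsto_bot
  · set e₁ : EuclideanSpace ℝ (Fin N) := EuclideanSpace.single (⟨0, hN⟩ : Fin N) (1:ℝ) with he₁def
    have he₁ : ‖e₁‖ = 1 := by
      rw [he₁def, EuclideanSpace.norm_single, norm_one]
    obtain ⟨C, hC, hψ⟩ := aux_atTop hN hb hbb' hu hv hupos hvpos hcu hcv hua hva he₁
    refine ⟨C, hC, ?_⟩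
    have hcomp : Tendsto (fun ξ : EuclideanSpace ℝ (Fin N) =>
        (∫ x, u (x - ‖ξ‖ • e₁) * v x) / (Real.exp (-b * ‖ξ‖) * ‖ξ‖ ^ a))
        (cocompact (EuclideanSpace ℝ (Fin N))) (𝓝 C) :=
      hψ.comp tendsto_norm_cocompact_atTop
    apply hcomp.congr
    intro ξ
    rw [aux_rot hurad hvrad he₁ ξ]
end

section
/- Let U be the positive radial solution of −ΔU + ω₀U = μ₂U³ with the standard decay U(x) ~ C₀ e^{−√ω₀|x|}|x|^{−(N−1)/2}. Set U_{±P}(x) = U(x ∓ P/ε) with P = ρ (1,0,…,0). Then ‖U_{P}² U_{−P}‖_{L²(ℝ^N)} ≤ C e^{−2√ω₀ ρ/ε} (ρ/ε)^{−(N−1)/2} for ρ/ε large. -/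
open MeasureTheory Filter Topology
open scoped ENNReal NNReal

set_option maxHeartbeats 1000000

lemma aux_exp_poly_bound (b : ℝ) (hb : 0 < b) (n : ℕ) :
    ∃ K : ℝ, 0 < K ∧ ∀ t : ℝ, 0 ≤ t → (1 + t) ^ n ≤ K * Real.exp (b * t) := by
  rcases Nat.eq_zero_or_pos n with hn | hn
  · exact ⟨1, one_pos, fun t ht => by
      simp [hn]; exact le_trans (by nlinarith [Real.add_one_le_exp (b*t)]) le_rfl⟩
  have hn0 : (0:ℝ) < n := by exact_mod_cast hn
  set c : ℝ := b / n with hc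
  have hc0 : 0 < c := by positivity
  set L : ℝ := max 1 (1/c) with hL
  have hL1 : (1:ℝ) ≤ L := le_max_left _ _
  have hLc : 1 ≤ L * c := by
    have h1 : 1/c ≤ L := le_max_right _ _
    calc (1:ℝ) = (1/c) * c := by field_simp
      _ ≤ L * c := by nlinarith
  refine ⟨L ^ n, by positivity, fun t ht => ?_⟩
  have h1 : 1 + t ≤ L * Real.exp (c * t) := by
    have h2 : c * t + 1 ≤ Real.exp (c * t) := Real.add_one_le_exp _
    nlinarith [Real.exp_pos (c*t)]
  have h3 : (1 + t) ^ n ≤ (L * Real.exp (c * t)) ^ n :=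
    pow_le_pow_left₀ (by linarith) h1 n
  calc (1 + t) ^ n ≤ (L * Real.exp (c * t)) ^ n := h3
    _ = L ^ n * Real.exp (c * t) ^ n := mul_pow _ _ _
    _ = L ^ n * Real.exp (b * t) := by
        rw [← Real.exp_nat_mul]
        congr 1
        rw [show (n:ℝ) * (c * t) = b * t by rw [hc]; field_simp]

lemma integrable_exp_neg_norm {N : ℕ} {b : ℝ} (hb : 0 < b) :
    Integrable (fun x : EuclideanSpace ℝ (Fin N) => Real.exp (-b * ‖x‖)) volume := by
  obtain ⟨K, hK0, hK⟩ := aux_exp_poly_bound b hb (N + 1)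
  have hint : Integrable
      (fun x : EuclideanSpace ℝ (Fin N) => K * (1 + ‖x‖) ^ (-((N : ℝ) + 1))) volume := by
    refine (integrable_one_add_norm ?_).const_mul K
    rw [finrank_euclideanSpace, Fintype.card_fin]
    linarith
  refine hint.mono' ?_ (Filter.Eventually.of_forall fun x => ?_)
  · exact (Real.continuous_exp.comp ((continuous_norm).const_smul (-b))).aestronglyMeasurable
  · have ht : (0:ℝ) ≤ ‖x‖ := norm_nonneg _
    have h0 : (0:ℝ) < 1 + ‖x‖ := by linarith
    have h2 : ((1 + ‖x‖) : ℝ) ^ (-((N : ℝ) + 1)) = ((1 + ‖x‖) ^ (N + 1 : ℕ))⁻¹ := by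
      rw [← Real.rpow_natCast (1 + ‖x‖) (N + 1), ← Real.rpow_neg h0.le]
      norm_num
    rw [Real.norm_of_nonneg (Real.exp_pos _).le, h2]
    rw [← div_eq_mul_inv, le_div_iff₀ (by positivity)]
    calc Real.exp (-b * ‖x‖) * (1 + ‖x‖) ^ (N + 1)
        ≤ Real.exp (-b * ‖x‖) * (K * Real.exp (b * ‖x‖)) :=
          mul_le_mul_of_nonneg_left (hK _ ht) (Real.exp_pos _).le
      _ = K * (Real.exp (-b * ‖x‖) * Real.exp (b * ‖x‖)) := by ring
      _ = K := by rw [← Real.exp_add]; simp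

lemma memLp_exp_neg_norm {N : ℕ} {b : ℝ} (hb : 0 < b) :
    MemLp (fun x : EuclideanSpace ℝ (Fin N) => Real.exp (-b * ‖x‖)) 2 volume := by
  have hc : Continuous fun x : EuclideanSpace ℝ (Fin N) => Real.exp (-b * ‖x‖) :=
    Real.continuous_exp.comp ((continuous_norm).const_smul (-b))
  refine (memLp_two_iff_integrable_sq hc.aestronglyMeasurable).mpr ?_
  refine (integrable_exp_neg_norm (N := N) (b := 2 * b) (by linarith)).congr
    (Filter.Eventually.of_forall fun x => ?_)
  simp only [sq, ← Real.exp_add]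
  congr 1
  ring

lemma global_bound {N : ℕ} (hN : 0 < N) (ω₀ C₀ : ℝ)
    (hω₀ : 0 < ω₀) (hC₀ : 0 < C₀)
    (U : EuclideanSpace ℝ (Fin N) → ℝ)
    (hUc : Continuous U) (hUpos : ∀ x, 0 < U x)
    (hasym : Tendsto (fun x : EuclideanSpace ℝ (Fin N) =>
        U x / (C₀ * Real.exp (-(Real.sqrt ω₀) * ‖x‖) * ‖x‖ ^ (-((N : ℝ) - 1) / 2)))
      (cocompact (EuclideanSpace ℝ (Fin N))) (𝓝 1)) :
    ∃ M > (0:ℝ), ∀ y : EuclideanSpace ℝ (Fin N),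
      U y ≤ M * (Real.exp (-(Real.sqrt ω₀) * ‖y‖) * (1 + ‖y‖) ^ (-(((N : ℝ) - 1) / 2))) := by
  set s : ℝ := ((N : ℝ) - 1) / 2 with hs_def
  have hN1 : (1:ℝ) ≤ (N:ℝ) := by exact_mod_cast hN
  have hs0 : 0 ≤ s := by
    have : (0:ℝ) ≤ (N:ℝ) - 1 := by linarith
    exact div_nonneg this (by norm_num)
  have h32 : ∀ᶠ x in cocompact (EuclideanSpace ℝ (Fin N)),
      U x / (C₀ * Real.exp (-(Real.sqrt ω₀) * ‖x‖) * ‖x‖ ^ (-((N : ℝ) - 1) / 2)) ≤ 3/2 :=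
    hasym.eventually (eventually_le_nhds (by norm_num))
  obtain ⟨t, htc, hts⟩ := mem_cocompact.mp h32
  obtain ⟨r, hr⟩ := htc.isBounded.subset_closedBall 0
  set R₀ : ℝ := max r 1 + 1 with hR₀_def
  have hR₀1 : (1:ℝ) ≤ R₀ := by
    have := le_max_right r 1
    simp only [hR₀_def]; linarith
  have hR₀r : r < R₀ := by
    have := le_max_left r 1
    simp only [hR₀_def]; linarith
  -- outer bound
  have hbig : ∀ y : EuclideanSpace ℝ (Fin N), R₀ ≤ ‖y‖ →
      U y ≤ (3/2 * C₀ * (2:ℝ) ^ s) *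
        (Real.exp (-(Real.sqrt ω₀) * ‖y‖) * (1 + ‖y‖) ^ (-s)) := by
    intro y hy
    have hy0 : (0:ℝ) < ‖y‖ := by linarith
    have hyt : y ∈ tᶜ := by
      intro hyt
      have := hr hyt
      rw [Metric.mem_closedBall, dist_zero_right] at this
      linarith
    have hg : (0:ℝ) < C₀ * Real.exp (-(Real.sqrt ω₀) * ‖y‖) * ‖y‖ ^ (-((N : ℝ) - 1) / 2) := by
      have := Real.rpow_pos_of_pos hy0 (-((N : ℝ) - 1) / 2)
      positivity
    have h1 : U y ≤ 3/2 * (C₀ * Real.exp (-(Real.sqrt ω₀) * ‖y‖) * ‖y‖ ^ (-((N : ℝ) - 1) / 2)) :=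
      (div_le_iff₀ hg).mp (hts hyt)
    have hexp : -((N : ℝ) - 1) / 2 = -s := by rw [hs_def]; ring
    -- ‖y‖ ^ (-s) ≤ 2 ^ s * (1 + ‖y‖) ^ (-s)
    have hkey : ‖y‖ ^ (-s) ≤ (2:ℝ) ^ s * (1 + ‖y‖) ^ (-s) := by
      have hhalf : (1 + ‖y‖) / 2 ≤ ‖y‖ := by linarith
      have h2 : ‖y‖ ^ (-s) ≤ ((1 + ‖y‖) / 2) ^ (-s) :=
        Real.rpow_le_rpow_of_nonpos (by positivity) hhalf (neg_nonpos.mpr hs0)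
      have h3 : ((1 + ‖y‖) / 2) ^ (-s) = (2:ℝ) ^ s * (1 + ‖y‖) ^ (-s) := by
        rw [Real.div_rpow (by positivity) (by norm_num), Real.rpow_neg (by norm_num : (0:ℝ) ≤ 2),
          div_eq_mul_inv, inv_inv]
        ring
      rw [h3] at h2; exact h2
    calc U y ≤ 3/2 * (C₀ * Real.exp (-(Real.sqrt ω₀) * ‖y‖) * ‖y‖ ^ (-s)) := by
          rw [← hexp]; exact h1
      _ ≤ 3/2 * (C₀ * Real.exp (-(Real.sqrt ω₀) * ‖y‖) * ((2:ℝ) ^ s * (1 + ‖y‖) ^ (-s)))  := by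
          have he : (0:ℝ) < Real.exp (-(Real.sqrt ω₀) * ‖y‖) := Real.exp_pos _
          have := mul_le_mul_of_nonneg_left hkey (by positivity : (0:ℝ) ≤ C₀ * Real.exp (-(Real.sqrt ω₀) * ‖y‖))
          nlinarith
      _ = (3/2 * C₀ * (2:ℝ) ^ s) * (Real.exp (-(Real.sqrt ω₀) * ‖y‖) * (1 + ‖y‖) ^ (-s)) := by
          ring
  -- inner bound
  obtain ⟨M₂, hM₂⟩ := (isCompact_closedBall (0 : EuclideanSpace ℝ (Fin N)) R₀).exists_bound_of_continuousOn hUc.continuousOn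
  have hM₂0 : 0 ≤ M₂ := le_trans (norm_nonneg _) (hM₂ 0 (Metric.mem_closedBall_self (by linarith)))
  set c : ℝ := Real.exp (-(Real.sqrt ω₀) * R₀) * (1 + R₀) ^ (-s) with hc_def
  have hc0 : 0 < c := by
    have := Real.rpow_pos_of_pos (by linarith : (0:ℝ) < 1 + R₀) (-s)
    positivity
  have hsmall : ∀ y : EuclideanSpace ℝ (Fin N), ‖y‖ ≤ R₀ →
      U y ≤ (M₂ / c) * (Real.exp (-(Real.sqrt ω₀) * ‖y‖) * (1 + ‖y‖) ^ (-s)) := by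
    intro y hy
    have hsq : 0 ≤ Real.sqrt ω₀ := Real.sqrt_nonneg _
    have hcy : c ≤ Real.exp (-(Real.sqrt ω₀) * ‖y‖) * (1 + ‖y‖) ^ (-s) := by
      have h1 : Real.exp (-(Real.sqrt ω₀) * R₀) ≤ Real.exp (-(Real.sqrt ω₀) * ‖y‖) := by
        apply Real.exp_le_exp.mpr
        nlinarith
      have h2 : (1 + R₀ : ℝ) ^ (-s) ≤ (1 + ‖y‖) ^ (-s) :=
        Real.rpow_le_rpow_of_nonpos (by positivity) (by linarith) (neg_nonpos.mpr hs0)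
      have hp1 : (0:ℝ) < (1 + R₀ : ℝ) ^ (-s) := Real.rpow_pos_of_pos (by linarith) _
      have hp2 : (0:ℝ) < Real.exp (-(Real.sqrt ω₀) * ‖y‖) := Real.exp_pos _
      rw [hc_def]
      nlinarith [Real.exp_pos (-(Real.sqrt ω₀) * R₀)]
    have hUy : U y ≤ M₂ := by
      have := hM₂ y (by rwa [Metric.mem_closedBall, dist_zero_right])
      exact le_trans (le_abs_self _) this
    calc U y ≤ M₂ := hUy
      _ = (M₂ / c) * c := by field_simp
      _ ≤ (M₂ / c) * (Real.exp (-(Real.sqrt ω₀) * ‖y‖) * (1 + ‖y‖) ^ (-s)) := by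
          apply mul_le_mul_of_nonneg_left hcy (by positivity)
  refine ⟨max (3/2 * C₀ * (2:ℝ) ^ s) (M₂ / c), ?_, fun y => ?_⟩
  · have : (0:ℝ) < 3/2 * C₀ * (2:ℝ) ^ s := by positivity
    exact lt_of_lt_of_le this (le_max_left _ _)
  · have hnn : (0:ℝ) ≤ Real.exp (-(Real.sqrt ω₀) * ‖y‖) * (1 + ‖y‖) ^ (-s) := by
      have := Real.rpow_pos_of_pos (by positivity : (0:ℝ) < 1 + ‖y‖) (-s)
      positivity
    rcases le_total ‖y‖ R₀ with h | h
    · exact le_trans (hsmall y h) (mul_le_mul_of_nonneg_right (le_max_right _ _) hnn)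
    · exact le_trans (hbig y h) (mul_le_mul_of_nonneg_right (le_max_left _ _) hnn)

/-- interaction bound
`‖U_P² U_{−P}‖_{L²} ≤ C e^{−2√ω₀ρ/ε}(ρ/ε)^{−(N−1)/2}` for `ρ/ε` large, where
`U_{±P}(x) = U(x ∓ (ρ/ε)e₁)` and `U` is the ground state with the standard decay. -/
theorem stmt10 {N : ℕ} (hN : 0 < N) (ω₀ μ₂ C₀ : ℝ)
    (hω₀ : 0 < ω₀) (hμ₂ : 0 < μ₂) (hC₀ : 0 < C₀)
    (U : EuclideanSpace ℝ (Fin N) → ℝ)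
    (hUc : Continuous U) (hUpos : ∀ x, 0 < U x)
    (hUrad : ∀ x y : EuclideanSpace ℝ (Fin N), ‖x‖ = ‖y‖ → U x = U y)
    (heq : ∀ x, -lap U x + ω₀ * U x = μ₂ * (U x) ^ 3)
    (hasym : Tendsto (fun x : EuclideanSpace ℝ (Fin N) =>
        U x / (C₀ * Real.exp (-(Real.sqrt ω₀) * ‖x‖) * ‖x‖ ^ (-((N : ℝ) - 1) / 2)))
      (cocompact (EuclideanSpace ℝ (Fin N))) (𝓝 1)) :
    ∃ C > (0 : ℝ), ∃ T : ℝ, ∀ ρ ε : ℝ, 0 < ε → 0 < ρ → T < ρ / ε →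
      eLpNorm (fun x : EuclideanSpace ℝ (Fin N) =>
          (U (x - (ρ / ε) • EuclideanSpace.single (⟨0, hN⟩ : Fin N) 1)) ^ 2 *
            U (x + (ρ / ε) • EuclideanSpace.single (⟨0, hN⟩ : Fin N) 1)) 2 volume
        ≤ ENNReal.ofReal
            (C * Real.exp (-2 * Real.sqrt ω₀ * (ρ / ε)) *
              (ρ / ε) ^ (-((N : ℝ) - 1) / 2)) := by
  set s : ℝ := ((N : ℝ) - 1) / 2 with hs_def
  have hN1 : (1:ℝ) ≤ (N:ℝ) := by exact_mod_cast hN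
  have hs0 : 0 ≤ s := by
    have : (0:ℝ) ≤ (N:ℝ) - 1 := by linarith
    exact div_nonneg this (by norm_num)
  have hω : 0 < Real.sqrt ω₀ := Real.sqrt_pos.mpr hω₀
  obtain ⟨M, hM0, hM⟩ := global_bound hN ω₀ C₀ hω₀ hC₀ U hUc hUpos hasym
  -- the reference L² norm
  have hmem : MemLp (fun x : EuclideanSpace ℝ (Fin N) =>
      Real.exp (-(Real.sqrt ω₀) * ‖x‖)) 2 volume := memLp_exp_neg_norm hω
  set J := eLpNorm (fun x : EuclideanSpace ℝ (Fin N) =>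
      Real.exp (-(Real.sqrt ω₀) * ‖x‖)) 2 volume with hJ_def
  have hJlt : J < ⊤ := hmem.2
  set I : ℝ := J.toReal + 1 with hI_def
  have hI0 : (0:ℝ) < I := by positivity
  have hJI : J ≤ ENNReal.ofReal I := by
    have : J = ENNReal.ofReal J.toReal := (ENNReal.ofReal_toReal hJlt.ne).symm
    rw [this]
    exact ENNReal.ofReal_le_ofReal (by simp [hI_def])
  refine ⟨M ^ 3 * I, by positivity, 0, fun ρ ε hε hρ hT => ?_⟩
  set R : ℝ := ρ / ε with hR_def
  have hR0 : (0:ℝ) < R := hT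
  set a : EuclideanSpace ℝ (Fin N) := R • EuclideanSpace.single (⟨0, hN⟩ : Fin N) 1 with ha_def
  have hnorma : ‖a‖ = R := by
    rw [ha_def, norm_smul, EuclideanSpace.norm_single]
    simp [abs_of_pos hR0]
  set K : ℝ := M ^ 3 * Real.exp (-2 * Real.sqrt ω₀ * R) * R ^ (-s) with hK_def
  have hRs : (0:ℝ) < R ^ (-s) := Real.rpow_pos_of_pos hR0 _
  have hK0 : 0 ≤ K := by positivity
  -- pointwise bound
  have hpt : ∀ x : EuclideanSpace ℝ (Fin N),
      U (x - a) ^ 2 * U (x + a) ≤ K * Real.exp (-(Real.sqrt ω₀) * ‖x - a‖) := by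
    intro x
    set d₁ : ℝ := ‖x - a‖ with hd₁
    set d₂ : ℝ := ‖x + a‖ with hd₂
    have hd₁0 : 0 ≤ d₁ := norm_nonneg _
    have hd₂0 : 0 ≤ d₂ := norm_nonneg _
    have h2R : 2 * R ≤ d₁ + d₂ := by
      have he : (x + a) - (x - a) = (2:ℝ) • a := by
        rw [two_smul]; abel
      have h1 : ‖(x + a) - (x - a)‖ ≤ d₂ + d₁ := norm_sub_le _ _
      rw [he, norm_smul] at h1
      simp only [Real.norm_ofNat, hnorma] at h1
      linarith
    set E₁ : ℝ := Real.exp (-(Real.sqrt ω₀) * d₁) with hE₁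
    set E₂ : ℝ := Real.exp (-(Real.sqrt ω₀) * d₂) with hE₂
    set G₁ : ℝ := (1 + d₁) ^ (-s) with hG₁
    set G₂ : ℝ := (1 + d₂) ^ (-s) with hG₂
    have hG₁0 : 0 < G₁ := Real.rpow_pos_of_pos (by linarith) _
    have hG₂0 : 0 < G₂ := Real.rpow_pos_of_pos (by linarith) _
    have hE₁0 : 0 < E₁ := Real.exp_pos _
    have hE₂0 : 0 < E₂ := Real.exp_pos _
    have hU1 : U (x - a) ≤ M * (E₁ * G₁) := hM (x - a)
    have hU2 : U (x + a) ≤ M * (E₂ * G₂) := hM (x + a)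
    have hstep1 : U (x - a) ^ 2 * U (x + a) ≤ M ^ 3 * (E₁ ^ 2 * E₂) * (G₁ ^ 2 * G₂) := by
      have h1 : U (x - a) ^ 2 ≤ (M * (E₁ * G₁)) ^ 2 :=
        pow_le_pow_left₀ (hUpos _).le hU1 2
      have h2 : U (x - a) ^ 2 * U (x + a) ≤ (M * (E₁ * G₁)) ^ 2 * (M * (E₂ * G₂)) := by
        apply mul_le_mul h1 hU2 (hUpos _).le (by positivity)
      calc U (x - a) ^ 2 * U (x + a) ≤ (M * (E₁ * G₁)) ^ 2 * (M * (E₂ * G₂)) := h2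
        _ = M ^ 3 * (E₁ ^ 2 * E₂) * (G₁ ^ 2 * G₂) := by ring
    have hE : E₁ ^ 2 * E₂ ≤ Real.exp (-2 * Real.sqrt ω₀ * R) * Real.exp (-(Real.sqrt ω₀) * d₁) := by
      have h1 : E₁ ^ 2 * E₂ = Real.exp (-(Real.sqrt ω₀) * (2 * d₁ + d₂)) := by
        rw [hE₁, hE₂, sq, ← Real.exp_add, ← Real.exp_add]
        congr 1; ring
      have h2 : Real.exp (-2 * Real.sqrt ω₀ * R) * Real.exp (-(Real.sqrt ω₀) * d₁)
          = Real.exp (-2 * Real.sqrt ω₀ * R + -(Real.sqrt ω₀) * d₁) := (Real.exp_add _ _).symm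
      rw [h1, h2]
      apply Real.exp_le_exp.mpr
      have hx : (0:ℝ) ≤ Real.sqrt ω₀ * (d₁ + d₂ - 2 * R) :=
        mul_nonneg hω.le (by linarith)
      linarith [hx]
    have hG : G₁ ^ 2 * G₂ ≤ R ^ (-s) := by
      have hG₁1 : G₁ ≤ 1 :=
        Real.rpow_le_one_of_one_le_of_nonpos (by linarith) (neg_nonpos.mpr hs0)
      have hprod : G₁ * G₂ ≤ R ^ (-s) := by
        have h1 : G₁ * G₂ = ((1 + d₁) * (1 + d₂)) ^ (-s) :=
          (Real.mul_rpow (by linarith) (by linarith)).symm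
        have h2 : R ≤ (1 + d₁) * (1 + d₂) := by nlinarith
        rw [h1]
        exact Real.rpow_le_rpow_of_nonpos hR0 h2 (neg_nonpos.mpr hs0)
      calc G₁ ^ 2 * G₂ = G₁ * (G₁ * G₂) := by ring
        _ ≤ 1 * (R ^ (-s)) := by
            apply mul_le_mul hG₁1 hprod (by positivity) (by norm_num)
        _ = R ^ (-s) := one_mul _
    calc U (x - a) ^ 2 * U (x + a) ≤ M ^ 3 * (E₁ ^ 2 * E₂) * (G₁ ^ 2 * G₂) := hstep1
      _ ≤ M ^ 3 * (Real.exp (-2 * Real.sqrt ω₀ * R) * Real.exp (-(Real.sqrt ω₀) * d₁)) * (R ^ (-s)) := by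
          apply mul_le_mul (mul_le_mul_of_nonneg_left hE (by positivity)) hG (by positivity) (by positivity)
      _ = K * Real.exp (-(Real.sqrt ω₀) * d₁) := by rw [hK_def]; ring
  -- assemble
  have hmono : eLpNorm (fun x : EuclideanSpace ℝ (Fin N) =>
        U (x - a) ^ 2 * U (x + a)) 2 volume
      ≤ eLpNorm (fun x : EuclideanSpace ℝ (Fin N) =>
        K * Real.exp (-(Real.sqrt ω₀) * ‖x - a‖)) 2 volume := by
    apply eLpNorm_mono
    intro x
    rw [Real.norm_of_nonneg (mul_nonneg (sq_nonneg _) (hUpos _).le),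
      Real.norm_of_nonneg (by positivity : (0:ℝ) ≤ K * Real.exp (-(Real.sqrt ω₀) * ‖x - a‖))]
    exact hpt x
  have htrans : eLpNorm (fun x : EuclideanSpace ℝ (Fin N) =>
      Real.exp (-(Real.sqrt ω₀) * ‖x - a‖)) 2 volume = J := by
    rw [hJ_def]
    exact eLpNorm_comp_measurePreserving hmem.aestronglyMeasurable
      (measurePreserving_sub_right volume a)
  have hsmul : eLpNorm (fun x : EuclideanSpace ℝ (Fin N) =>
        K * Real.exp (-(Real.sqrt ω₀) * ‖x - a‖)) 2 volume
      ≤ ENNReal.ofReal K * J := by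
    have h1 : (fun x : EuclideanSpace ℝ (Fin N) =>
        K * Real.exp (-(Real.sqrt ω₀) * ‖x - a‖))
        = K • (fun x : EuclideanSpace ℝ (Fin N) =>
        Real.exp (-(Real.sqrt ω₀) * ‖x - a‖)) := rfl
    rw [h1]
    refine le_trans eLpNorm_const_smul_le ?_
    rw [htrans]
    have : (‖K‖₊ : ℝ≥0∞) = ENNReal.ofReal K := by
      rw [← Real.enorm_eq_ofReal hK0]; rfl
    rw [Real.enorm_eq_ofReal hK0]
  calc eLpNorm (fun x : EuclideanSpace ℝ (Fin N) =>
        U (x - (ρ / ε) • EuclideanSpace.single (⟨0, hN⟩ : Fin N) 1) ^ 2 *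
          U (x + (ρ / ε) • EuclideanSpace.single (⟨0, hN⟩ : Fin N) 1)) 2 volume
      ≤ ENNReal.ofReal K * J := le_trans hmono hsmul
    _ ≤ ENNReal.ofReal K * ENNReal.ofReal I := mul_le_mul_right hJI _
    _ = ENNReal.ofReal (K * I) := (ENNReal.ofReal_mul hK0).symm
    _ = ENNReal.ofReal (M ^ 3 * I * Real.exp (-2 * Real.sqrt ω₀ * (ρ / ε)) *
        (ρ / ε) ^ (-((N : ℝ) - 1) / 2)) := by
        congr 1
        rw [hK_def, neg_div]
        ring
end
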